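/- Let Γ, Γ', Δ be finite groups acting on sets U, U', V respectively, let ρ : Γ → Δ and ρ' : Γ' → Δ be homomorphisms, and let f : U → V, f' : U' → V be ρ- and ρ'-equivariant maps. Then there is a canonical bijection between the quotient set ((U × U') ×_{f×f', V×V, π} (V × Δ))/(Γ × Γ'), where π(v,δ) = (v, δ·v) and (γ,γ') acts by ((u,u'),(v,δ)) ↦ ((γ·u, γ'·u'), (ρ(γ)·v, ρ(γ) δ ρ'(γ')⁻¹)), and the set of triples { ([u],[u'],D) : u ∈ U, u' ∈ U', [f(u)] = [f'(u')] in V/Δ, D a double coset in f-related stabilizer data }, namely the set {(p,p',D) : p ∈ U/Γ, p' ∈ U'/Γ', images in V/Δ agree, D ∈ appropriate double coset space} described by the orbifold fibre product formula. -/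
import Mathlib


/-- Let finite groups `Γ, Γ', Δ` act on `U, U', V`, let `ρ : Γ → Δ`,
`ρ' : Γ' → Δ` be homomorphisms and `f : U → V`, `f' : U' → V` be `ρ`- resp.
`ρ'`-equivariant.  Form `F = (U × U') ×_{f×f', V×V, π} (V × Δ)` with `π(v,δ) = (v, δ·v)`,
with the `Γ × Γ'`-action `((u,u'),(v,δ)) ↦ ((γ·u, γ'·u'), (ρ(γ)·v, ρ(γ) δ ρ'(γ')⁻¹))`.
Then there is a canonical bijection between the orbit set `F/(Γ × Γ')` and the set of
triples `(Γu, Γ'u', ρ(Stab_Γ(u)) δ ρ'(Stab_{Γ'}(u')))` with `f'(u') = δ·f(u)`, modulo the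
evident equivalence (realised as the quotient of `S = {(u,u',δ) : f'(u') = δ·f(u)}` by
the relation recording the `Γ`-orbit of `u`, the `Γ'`-orbit of `u'` and the stabilizer
double coset of `δ`). -/
theorem orbifold_fibre_product_orbits
    (Γ Γ' Δ : Type*) [Group Γ] [Group Γ'] [Group Δ]
    (U U' V : Type*) [MulAction Γ U] [MulAction Γ' U'] [MulAction Δ V]
    (ρ : Γ →* Δ) (ρ' : Γ' →* Δ)
    (f : U → V) (f' : U' → V)
    (hf : ∀ (γ : Γ) (u : U), f (γ • u) = ρ γ • f u)
    (hf' : ∀ (γ' : Γ') (u' : U'), f' (γ' • u') = ρ' γ' • f' u')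
    (rOrb : {w : (U × U') × (V × Δ) // f w.1.1 = w.2.1 ∧ f' w.1.2 = w.2.2 • w.2.1} →
            {w : (U × U') × (V × Δ) // f w.1.1 = w.2.1 ∧ f' w.1.2 = w.2.2 • w.2.1} → Prop)
    (hrOrb : ∀ w₁ w₂, rOrb w₁ w₂ ↔ ∃ (γ : Γ) (γ' : Γ'),
        w₂.1 = ((γ • w₁.1.1.1, γ' • w₁.1.1.2),
           (ρ γ • w₁.1.2.1, ρ γ * w₁.1.2.2 * (ρ' γ')⁻¹)))
    (rTri : {t : U × U' × Δ // f' t.2.1 = t.2.2 • f t.1} →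
            {t : U × U' × Δ // f' t.2.1 = t.2.2 • f t.1} → Prop)
    (hrTri : ∀ t₁ t₂, rTri t₁ t₂ ↔ ∃ (γ : Γ) (γ' : Γ') (σ : Γ) (σ' : Γ'),
        t₂.1.1 = γ • t₁.1.1 ∧
        t₂.1.2.1 = γ' • t₁.1.2.1 ∧
        σ • t₂.1.1 = t₂.1.1 ∧
        σ' • t₂.1.2.1 = t₂.1.2.1 ∧
        t₂.1.2.2 = ρ σ * (ρ γ * t₁.1.2.2 * (ρ' γ')⁻¹) * (ρ' σ')⁻¹) :
    ∃ e : Quot rOrb ≃ Quot rTri,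
      ∀ w, e (Quot.mk rOrb w) =
        Quot.mk rTri ⟨(w.1.1.1, w.1.1.2, w.1.2.2), by
          exact w.2.2.trans (by rw [w.2.1])⟩ := by
  classical
  refine ⟨⟨Quot.lift (fun w => Quot.mk rTri ⟨(w.1.1.1, w.1.1.2, w.1.2.2),
        w.2.2.trans (by rw [w.2.1])⟩) ?_,
      Quot.lift (fun t => Quot.mk rOrb ⟨((t.1.1, t.1.2.1), (f t.1.1, t.1.2.2)),
        rfl, t.2⟩) ?_, ?_, ?_⟩, fun w => rfl⟩
  · intro w₁ w₂ h
    obtain ⟨γ, γ', hw⟩ := (hrOrb _ _).1 h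
    apply Quot.sound
    rw [hrTri]
    refine ⟨γ, γ', 1, 1, congrArg (fun x => x.1.1) hw, congrArg (fun x => x.1.2) hw,
      one_smul _ _, one_smul _ _, ?_⟩
    have := congrArg (fun x => x.2.2) hw
    simp only at this ⊢
    rw [this]
    simp
  · intro t₁ t₂ h
    obtain ⟨γ, γ', σ, σ', h1, h2, h3, h4, h5⟩ := (hrTri _ _).1 h
    apply Quot.sound
    rw [hrOrb]
    refine ⟨σ * γ, σ' * γ', ?_⟩
    obtain ⟨⟨u₁, u₁', δ₁⟩, ht1⟩ := t₁
    obtain ⟨⟨u₂, u₂', δ₂⟩, ht2⟩ := t₂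
    simp only at h1 h2 h3 h4 h5 ⊢
    have e1 : (σ * γ) • u₁ = u₂ := by rw [mul_smul, ← h1, h3]
    have e2 : (σ' * γ') • u₁' = u₂' := by rw [mul_smul, ← h2, h4]
    refine Prod.ext (Prod.ext ?_ ?_) (Prod.ext ?_ ?_) <;> simp only
    · exact e1.symm
    · exact e2.symm
    · rw [← e1, hf]
    · rw [h5, map_mul, map_mul, mul_inv_rev]
      group
  · intro q
    induction q using Quot.ind with
    | _ w =>
      obtain ⟨⟨⟨u, u'⟩, v, δ⟩, h1, h2⟩ := w
      exact congrArg _ (Subtype.ext (by simp only; rw [h1]))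
  · intro q
    induction q using Quot.ind with
    | _ t => rfl
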